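/- Let N ≥ 1, 1 ≤ N_v ≤ N, M = N − N_v + 1, and let L be divisible by N_v with T = L/N_v. Let F = [f_0, …, f_{T−1}] ∈ ℂ^{M×T}, and let W ∈ ℂ^{N×L} be the SVAM beamformer matrix whose column with index l = t·N_v + m (0 ≤ m < N_v, 0 ≤ t < T) is w_l = [0_m^T, f_t^T, 0_{N_v−1−m}^T]^T ∈ ℂ^N (the vector f_t shifted down by m positions and zero-padded). Then for every u ∈ ℝ: (∂φ_N(u)/∂u)^H W W^H (∂φ_N(u)/∂u) = N_v · [ (∂φ_M(u)/∂u)^H F F^H (∂φ_M(u)/∂u) + G ], where G = (π²(N_v−1)(2N_v−1)/6) · φ_M(u)^H F F^H φ_M(u) − π(N_v−1) · Im{ (∂φ_M(u)/∂u)^H F F^H φ_M(u) }. Consequently (for α ≠ 0, P_s > 0, σ_n² > 0, and the bracketed quantity nonzero) the Cramér–Rao bound for estimating u from measurements y = √P_s α W^H φ_N(u) + n, n ∼ CN(0, σ_n² I), equals CRB(u) = (1/N_v)·(σ_n²/(2P_s|α|²))·{(∂φ_M(u)/∂u)^H F F^H (∂φ_M(u)/∂u) + G}^{-1}. -/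

import Mathlib

open Matrix

/-- Steering vector of a ULA: `(φ_N(u))_n = exp(iπnu)`. -/
noncomputable def steer (N : ℕ) (u : ℝ) : Fin N → ℂ :=
  fun n => Complex.exp (Complex.I * (Real.pi * u * n))

/-- Entrywise derivative of the steering vector: `(∂φ_N(u)/∂u)_n = iπn·exp(iπnu)`. -/
noncomputable def dsteer (N : ℕ) (u : ℝ) : Fin N → ℂ :=
  fun n => Complex.I * (Real.pi * n) * Complex.exp (Complex.I * (Real.pi * u * n))

lemma keyl {p q : ℕ} (A : Matrix (Fin p) (Fin q) ℂ) (x y : Fin p → ℂ) :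
    star x ⬝ᵥ ((A * Aᴴ) *ᵥ y) =
    ∑ j, (starRingEnd ℂ) (∑ n, (starRingEnd ℂ) (A n j) * x n) *
      (∑ n, (starRingEnd ℂ) (A n j) * y n) := by
  rw [← mulVec_mulVec, dotProduct_mulVec]
  have : star x ᵥ* A = star (Aᴴ *ᵥ x) := by
    rw [star_mulVec, conjTranspose_conjTranspose]
  rw [this]
  simp only [dotProduct, mulVec, Pi.star_apply, RCLike.star_def, map_sum, dotProduct,
    conjTranspose_apply, RCLike.star_def]

lemma sum_id_real (n : ℕ) : ∑ i ∈ Finset.range n, (i : ℝ) = n * (n - 1) / 2 := by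
  induction n with
  | zero => simp
  | succ n ih => rw [Finset.sum_range_succ, ih]; push_cast; ring

lemma sum_sq_real (n : ℕ) : ∑ i ∈ Finset.range n, (i : ℝ) ^ 2
    = n * (n - 1) * (2 * n - 1) / 6 := by
  induction n with
  | zero => simp
  | succ n ih => rw [Finset.sum_range_succ, ih]; push_cast; ring

lemma ptl (a b E : ℂ) (hE : (starRingEnd ℂ) E * E = 1) (r : ℝ) :
    (starRingEnd ℂ) (E * (a + Complex.I * r * b)) * (E * (a + Complex.I * r * b))
    = (starRingEnd ℂ) a * a + ((r ^ 2 : ℝ) : ℂ) * ((starRingEnd ℂ) b * b)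
      + ((-2 * r : ℝ) : ℂ) * ((((starRingEnd ℂ) a * b).im : ℝ) : ℂ) := by
  have hz := Complex.sub_conj ((starRingEnd ℂ) a * b)
  have hI := Complex.I_sq
  simp only [_root_.map_mul, map_add, Complex.conj_I, Complex.conj_ofReal,
    Complex.conj_conj] at hz ⊢
  push_cast at hz ⊢
  linear_combination ((starRingEnd ℂ) a + -(Complex.I) * (r : ℂ) * (starRingEnd ℂ) b)
      * (a + Complex.I * (r : ℂ) * b) * hE
    + Complex.I * (r : ℂ) * hz
    + (2 * (r : ℂ) * ((((starRingEnd ℂ) a * b).im : ℝ) : ℂ)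
        - (r : ℂ) ^ 2 * ((starRingEnd ℂ) b * b)) * hI

/-- for the SVAM beamformer matrix `W` (column `l = t·N_v + m` is
`f_t` shifted down by `m` positions and zero-padded, `M = N − N_v + 1`),
`(∂φ_N/∂u)ᴴ W Wᴴ (∂φ_N/∂u) = N_v ((∂φ_M/∂u)ᴴ F Fᴴ (∂φ_M/∂u) + G)` with
`G = (π²(N_v−1)(2N_v−1)/6) φ_Mᴴ F Fᴴ φ_M − π(N_v−1) Im{(∂φ_M/∂u)ᴴ F Fᴴ φ_M}`,
and hence the CRB equals
`(1/N_v)(σₙ²/(2Pₛ|α|²)){(∂φ_M/∂u)ᴴ F Fᴴ (∂φ_M/∂u) + G}⁻¹`. -/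
theorem stmt2
    (N M T Nv : ℕ) (hN : 1 ≤ N) (hNv : 0 < Nv) (hNvN : Nv ≤ N)
    (hM : M + Nv = N + 1) (hT : 1 ≤ T)
    (F : Matrix (Fin M) (Fin T) ℂ)
    (W : Matrix (Fin N) (Fin (T * Nv)) ℂ)
    (hW : ∀ (n : Fin N) (l : Fin (T * Nv)),
      W n l = if h : l.val % Nv ≤ n.val ∧ n.val - l.val % Nv < M then
          F ⟨n.val - l.val % Nv, h.2⟩
            ⟨l.val / Nv, (Nat.div_lt_iff_lt_mul hNv).mpr l.isLt⟩
        else 0)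
    (u : ℝ)
    (G : ℝ)
    (hG : G = Real.pi ^ 2 * ((Nv : ℝ) - 1) * (2 * (Nv : ℝ) - 1) / 6 *
        (star (steer M u) ⬝ᵥ ((F * Fᴴ) *ᵥ steer M u)).re
      - Real.pi * ((Nv : ℝ) - 1) *
        (star (dsteer M u) ⬝ᵥ ((F * Fᴴ) *ᵥ steer M u)).im)
    (Ps σn2 : ℝ) (hPs : 0 < Ps) (hσ : 0 < σn2) (α : ℂ) (hα : α ≠ 0) :
    star (dsteer N u) ⬝ᵥ ((W * Wᴴ) *ᵥ dsteer N u)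
      = (Nv : ℂ) * (star (dsteer M u) ⬝ᵥ ((F * Fᴴ) *ᵥ dsteer M u) + (G : ℂ)) ∧
    (star (dsteer M u) ⬝ᵥ ((F * Fᴴ) *ᵥ dsteer M u) + (G : ℂ) ≠ 0 →
      ((σn2 : ℂ) / (2 * Ps * Complex.normSq α)) *
        (star (dsteer N u) ⬝ᵥ ((W * Wᴴ) *ᵥ dsteer N u))⁻¹
      = (1 / (Nv : ℂ)) * (((σn2 : ℂ) / (2 * Ps * Complex.normSq α)) *
        (star (dsteer M u) ⬝ᵥ ((F * Fᴴ) *ᵥ dsteer M u) + (G : ℂ))⁻¹)) := by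
  set a : Fin T → ℂ := fun t => ∑ k, (starRingEnd ℂ) (F k t) * dsteer M u k with ha
  set b : Fin T → ℂ := fun t => ∑ k, (starRingEnd ℂ) (F k t) * steer M u k with hb
  have hA : star (dsteer M u) ⬝ᵥ ((F * Fᴴ) *ᵥ dsteer M u)
      = ∑ t, (starRingEnd ℂ) (a t) * a t := keyl F _ _
  have hB : star (steer M u) ⬝ᵥ ((F * Fᴴ) *ᵥ steer M u)
      = ∑ t, (starRingEnd ℂ) (b t) * b t := keyl F _ _
  have hZ : star (dsteer M u) ⬝ᵥ ((F * Fᴴ) *ᵥ steer M u)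
      = ∑ t, (starRingEnd ℂ) (a t) * b t := keyl F _ _
  -- column formula
  have hc : ∀ (t : Fin T) (m : Fin Nv),
      (∑ n : Fin N, (starRingEnd ℂ) (W n (finProdFinEquiv (t, m))) * dsteer N u n)
      = Complex.exp (Complex.I * (Real.pi * u * m)) *
        (a t + Complex.I * (Real.pi * m) * b t) := by
    intro t m
    set l : Fin (T * Nv) := finProdFinEquiv (t, m) with hl
    have hlv : (l : ℕ) = m + Nv * t := rfl
    have hmod : (l : ℕ) % Nv = m := by
      rw [hlv, Nat.add_mul_mod_self_left, Nat.mod_eq_of_lt m.isLt]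
    have hdiv : (l : ℕ) / Nv = t := by
      rw [hlv, Nat.add_mul_div_left _ _ hNv, Nat.div_eq_of_lt m.isLt, Nat.zero_add]
    have hkm : ∀ k : Fin M, (k : ℕ) + m < N := by
      intro k; have := k.isLt; have := m.isLt; omega
    set e : Fin M ↪ Fin N := ⟨fun k => ⟨k + m, hkm k⟩, show Function.Injective _ from by
      intro x y hxy
      simp only [Fin.mk.injEq] at hxy
      exact Fin.ext (by omega)⟩ with he
    have hsub : Finset.univ.map e ⊆ Finset.univ := Finset.subset_univ _
    rw [← Finset.sum_subset hsub ?zero]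
    case zero =>
      intro n _ hn
      have hcond : ¬ ((m : ℕ) ≤ n.val ∧ n.val - m < M) := by
        intro ⟨h1, h2⟩
        apply hn
        simp only [Finset.mem_map, Finset.mem_univ, true_and, he]
        exact ⟨⟨n.val - m, h2⟩, by
          simp only [Function.Embedding.coeFn_mk]
          exact Fin.ext (by simp; omega)⟩
      rw [hW, hmod, dif_neg hcond, map_zero, zero_mul]
    rw [Finset.sum_map]
    have hterm : ∀ k : Fin M, (starRingEnd ℂ) (W (e k) l) * dsteer N u (e k)
        = Complex.exp (Complex.I * (Real.pi * u * m)) *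
          ((starRingEnd ℂ) (F k t) * dsteer M u k
            + Complex.I * (Real.pi * m) * ((starRingEnd ℂ) (F k t) * steer M u k)) := by
      intro k
      have hcond : (l : ℕ) % Nv ≤ (e k).val ∧ (e k).val - (l : ℕ) % Nv < M := by
        constructor <;> simp [he, hmod, k.isLt]
      have hF : W (e k) l = F k t := by
        rw [hW, dif_pos hcond]
        congr 1 <;> apply Fin.ext <;> simp [he, hmod, hdiv]
      rw [hF]
      have hd : dsteer N u (e k) = Complex.exp (Complex.I * (Real.pi * u * m)) *
          (dsteer M u k + Complex.I * (Real.pi * m) * steer M u k) := by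
        show Complex.I * (Real.pi * ((e k : Fin N) : ℕ)) *
          Complex.exp (Complex.I * (Real.pi * u * ((e k : Fin N) : ℕ))) = _
        have hv : (((e k : Fin N)) : ℕ) = (k : ℕ) + (m : ℕ) := rfl
        rw [hv]
        unfold dsteer steer
        have harg : (Complex.I * (Real.pi * u * (((k : ℕ) + (m : ℕ) : ℕ) : ℂ)))
            = Complex.I * (Real.pi * u * ((m : ℕ) : ℂ))
              + Complex.I * (Real.pi * u * ((k : ℕ) : ℂ)) := by
          push_cast; ring
        rw [harg, Complex.exp_add]
        push_cast
        ring
      rw [hd]; ring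
    rw [Finset.sum_congr rfl (fun k _ => hterm k), ← Finset.mul_sum, Finset.sum_add_distrib,
      ← Finset.mul_sum]
  -- pointwise expansion
  have hpt : ∀ (t : Fin T) (m : Fin Nv),
      (starRingEnd ℂ) (∑ n, (starRingEnd ℂ) (W n (finProdFinEquiv (t, m))) * dsteer N u n) *
        (∑ n, (starRingEnd ℂ) (W n (finProdFinEquiv (t, m))) * dsteer N u n)
      = (starRingEnd ℂ) (a t) * a t
        + ((((Real.pi * (m : ℝ)) ^ 2 : ℝ)) : ℂ) * ((starRingEnd ℂ) (b t) * b t)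
        + ((-2 * (Real.pi * (m : ℝ)) : ℝ) : ℂ) * ((((starRingEnd ℂ) (a t) * b t).im : ℝ) : ℂ) := by
    intro t m
    rw [hc t m]
    have hr : (Complex.I * (Real.pi * (m : Fin Nv)) : ℂ)
        = Complex.I * ((Real.pi * ((m : ℕ) : ℝ) : ℝ) : ℂ) := by push_cast; ring
    have hE : (starRingEnd ℂ) (Complex.exp (Complex.I * (Real.pi * u * (m : Fin Nv))))
        * Complex.exp (Complex.I * (Real.pi * u * (m : Fin Nv))) = 1 := by
      rw [← Complex.exp_conj, ← Complex.exp_add]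
      have : (starRingEnd ℂ) (Complex.I * (Real.pi * u * (m : Fin Nv)))
          + Complex.I * (Real.pi * u * (m : Fin Nv)) = 0 := by
        simp [_root_.map_mul, Complex.conj_I]
      rw [this, Complex.exp_zero]
    rw [hr]
    exact ptl (a t) (b t) _ hE (Real.pi * (m : ℕ))
  -- sums of powers
  have hS1 : ((∑ m : Fin Nv, (Real.pi * (m : ℝ)) ^ 2 : ℝ) : ℂ)
      = ((Real.pi ^ 2 * ((Nv : ℝ) * ((Nv : ℝ) - 1) * (2 * (Nv : ℝ) - 1) / 6) : ℝ) : ℂ) := by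
    congr 1
    rw [Fin.sum_univ_eq_sum_range (fun i => (Real.pi * (i : ℝ)) ^ 2)]
    have h : ∀ i : ℕ, (Real.pi * (i : ℝ)) ^ 2 = Real.pi ^ 2 * (i : ℝ) ^ 2 := fun i => by ring
    simp only [h]
    rw [← Finset.mul_sum, sum_sq_real]
  have hS2 : ((∑ m : Fin Nv, (-2 * (Real.pi * (m : ℝ))) : ℝ) : ℂ)
      = ((-2 * Real.pi * ((Nv : ℝ) * ((Nv : ℝ) - 1) / 2) : ℝ) : ℂ) := by
    congr 1
    rw [Fin.sum_univ_eq_sum_range (fun i => (-2 * (Real.pi * (i : ℝ))))]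
    have h : ∀ i : ℕ, -2 * (Real.pi * (i : ℝ)) = (-2 * Real.pi) * (i : ℝ) := fun i => by ring
    simp only [h]
    rw [← Finset.mul_sum, sum_id_real]
  -- the main identity
  have hmain : star (dsteer N u) ⬝ᵥ ((W * Wᴴ) *ᵥ dsteer N u)
      = (Nv : ℂ) * (star (dsteer M u) ⬝ᵥ ((F * Fᴴ) *ᵥ dsteer M u) + (G : ℂ)) := by
    rw [keyl]
    rw [← Equiv.sum_comp finProdFinEquiv
      (fun l => (starRingEnd ℂ) (∑ n, (starRingEnd ℂ) (W n l) * dsteer N u n) *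
        (∑ n, (starRingEnd ℂ) (W n l) * dsteer N u n)), Fintype.sum_prod_type]
    calc ∑ t, ∑ m : Fin Nv,
          (starRingEnd ℂ) (∑ n, (starRingEnd ℂ) (W n (finProdFinEquiv (t, m))) * dsteer N u n) *
            (∑ n, (starRingEnd ℂ) (W n (finProdFinEquiv (t, m))) * dsteer N u n)
        = ∑ t, ((Nv : ℂ) * ((starRingEnd ℂ) (a t) * a t)
            + ((∑ m : Fin Nv, (Real.pi * (m : ℝ)) ^ 2 : ℝ) : ℂ) * ((starRingEnd ℂ) (b t) * b t)
            + ((∑ m : Fin Nv, (-2 * (Real.pi * (m : ℝ))) : ℝ) : ℂ) *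
              ((((starRingEnd ℂ) (a t) * b t).im : ℝ) : ℂ)) := by
          refine Finset.sum_congr rfl fun t _ => ?_
          rw [Finset.sum_congr rfl (fun m _ => hpt t m)]
          simp only [Finset.sum_add_distrib, ← Finset.sum_mul, Finset.sum_const,
            Finset.card_univ, Fintype.card_fin, nsmul_eq_mul, Complex.ofReal_sum]
          ring
      _ = (Nv : ℂ) * (∑ t, (starRingEnd ℂ) (a t) * a t)
            + ((∑ m : Fin Nv, (Real.pi * (m : ℝ)) ^ 2 : ℝ) : ℂ) *
              (∑ t, (starRingEnd ℂ) (b t) * b t)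
            + ((∑ m : Fin Nv, (-2 * (Real.pi * (m : ℝ))) : ℝ) : ℂ) *
              ((∑ t, ((starRingEnd ℂ) (a t) * b t).im : ℝ) : ℂ) := by
          simp only [Finset.sum_add_distrib, ← Finset.mul_sum, Complex.ofReal_sum]
      _ = (Nv : ℂ) * (star (dsteer M u) ⬝ᵥ ((F * Fᴴ) *ᵥ dsteer M u) + (G : ℂ)) := by
          rw [hS1, hS2, ← hA]
          have hZim : (∑ t, ((starRingEnd ℂ) (a t) * b t).im : ℝ)
              = (star (dsteer M u) ⬝ᵥ ((F * Fᴴ) *ᵥ steer M u)).im := by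
            rw [hZ, Complex.im_sum]
          have hRre : (((star (steer M u) ⬝ᵥ ((F * Fᴴ) *ᵥ steer M u)).re : ℝ) : ℂ)
              = ∑ t, (starRingEnd ℂ) (b t) * b t := by
            have hreal : ∑ t, (starRingEnd ℂ) (b t) * b t
                = ((∑ t, Complex.normSq (b t) : ℝ) : ℂ) := by
              push_cast
              exact Finset.sum_congr rfl fun t _ => by
                rw [mul_comm, Complex.mul_conj]
            rw [hB, hreal]
            simp
          rw [hZim, ← hRre, hG]
          push_cast
          ring
  refine ⟨hmain, fun hne => ?_⟩
  rw [hmain, mul_inv]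
  ring
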